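/- In the instance with n-1 'focused' players and one uniform player, every envy-free complete connected division must cut the cake exactly at the points i/n for i = 1, ..., n-1; consequently player n gets utility exactly 1/n and each focused player gets utility exactly 1/2. -/

import Mathlib

open MeasureTheory Set
open scoped ENNReal

/-- A connected division of the cake `[0,1]` among `n` players: each player gets an
open interval, the intervals are pairwise disjoint and contained in `[0,1]`. -/
structure ConnDiv (n : ℕ) where
  pieces : Fin n → Set ℝ
  isInterval : ∀ i, ∃ a b : ℝ, pieces i = Set.Ioo a b
  subset : ∀ i, pieces i ⊆ Set.Icc (0:ℝ) 1
  disj : Pairwise fun i j => Disjoint (pieces i) (pieces j)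

/-- A connected division is complete if the closures of the pieces cover `[0,1]`. -/
def ConnDiv.Complete {n : ℕ} (d : ConnDiv n) : Prop :=
  Set.Icc (0:ℝ) 1 ⊆ ⋃ i, closure (d.pieces i)

/-- Envy-freeness: every player weakly prefers her own piece. -/
def EnvyFree {n : ℕ} (v : Fin n → Measure ℝ) (d : ConnDiv n) : Prop :=
  ∀ i j, v i (d.pieces j) ≤ v i (d.pieces i)

/-- Utilitarian welfare: sum of own-piece values. -/
noncomputable def util {n : ℕ} (v : Fin n → Measure ℝ) (d : ConnDiv n) : ℝ≥0∞ :=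
  ∑ i, v i (d.pieces i)

/-- Egalitarian welfare: minimum own-piece value. -/
noncomputable def egal {n : ℕ} (v : Fin n → Measure ℝ) (d : ConnDiv n) : ℝ≥0∞ :=
  ⨅ i, v i (d.pieces i)

/-- The uniform measure of total mass `m` on the interval `(a,b)`. -/
noncomputable def unifOn (a b m : ℝ) : Measure ℝ :=
  ENNReal.ofReal (m / (b - a)) • volume.restrict (Set.Ioo a b)

/-- The instance with `n-1` focused players and one uniform player: for
`i < n-1`, player `i` (the `(i+1)`-st player) desires only the interval
`((i+1)/n - ε, (i+1)/n + ε)`, valued `1` uniformly; player `n` (index `n-1`)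
has the Lebesgue measure on `[0,1]`. -/
noncomputable def vFoc (n : ℕ) (ε : ℝ) : Fin n → Measure ℝ := fun i =>
  if i.val < n - 1 then
    unifOn (((i.val : ℝ) + 1)/n - ε) (((i.val : ℝ) + 1)/n + ε) 1
  else volume.restrict (Set.Icc (0:ℝ) 1)

lemma myIoo_sub_Icc {a b c e : ℝ} (hab : a < b) (h : Ioo a b ⊆ Icc c e) :
    c ≤ a ∧ b ≤ e := by
  have h2 : Icc a b ⊆ Icc c e := by
    rw [← closure_Ioo hab.ne]; exact closure_minimal h isClosed_Icc
  exact ⟨(h2 (left_mem_Icc.mpr hab.le)).1, (h2 (right_mem_Icc.mpr hab.le)).2⟩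

lemma vol_closure_Ioo (a b : ℝ) :
    volume (closure (Ioo a b)) = ENNReal.ofReal (b - a) := by
  rcases lt_or_ge a b with h | h
  · rw [closure_Ioo h.ne, Real.volume_Icc]
  · rw [Ioo_eq_empty (not_lt.mpr h), closure_empty, measure_empty, Eq.comm,
      ENNReal.ofReal_eq_zero]
    linarith

lemma grid_lemma (n : ℕ) (hn : 0 < n) (a b : ℝ) (ha : 0 ≤ a) (hb : b ≤ 1)
    (hab : a + 1/n < b) :
    ∃ k : ℕ, 1 ≤ k ∧ k < n ∧ a < (k:ℝ)/n ∧ (k:ℝ)/n < b := by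
  have hn0 : (0:ℝ) < n := Nat.cast_pos.mpr hn
  have hfl : (⌊a*n⌋₊ : ℝ) ≤ a * n := Nat.floor_le (by positivity)
  have hfl2 : a * n < (⌊a*n⌋₊ : ℝ) + 1 := Nat.lt_floor_add_one _
  have h1 : a < ((⌊a*n⌋₊ : ℕ) + 1 : ℝ)/n := by
    rw [lt_div_iff₀ hn0]; push_cast; linarith
  have h2 : ((⌊a*n⌋₊ : ℕ) + 1 : ℝ)/n < b := by
    rw [div_lt_iff₀ hn0]; push_cast
    have he : (a + 1/(n:ℝ)) * n = a * n + 1 := by field_simp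
    nlinarith [mul_lt_mul_of_pos_right hab hn0]
  refine ⟨⌊a*n⌋₊ + 1, by omega, ?_, ?_, ?_⟩
  · have : ((⌊a*n⌋₊ : ℕ) + 1 : ℝ)/n < 1 := lt_of_lt_of_le h2 hb
    have h3 : ((⌊a*n⌋₊ : ℕ) + 1 : ℝ) < n := by
      rw [div_lt_one hn0] at this; exact this
    exact_mod_cast (by push_cast; push_cast at h3; linarith : ((⌊a*n⌋₊ + 1 : ℕ) : ℝ) < (n:ℝ))
  · push_cast; push_cast at h1; exact h1
  · push_cast; push_cast at h2; exact h2

lemma vFoc_focused (n : ℕ) (ε : ℝ) (hε : 0 < ε) (i : Fin n) (hi : i.val < n - 1)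
    (S : Set ℝ) (hS : MeasurableSet S) :
    vFoc n ε i S = ENNReal.ofReal (1/(2*ε)) *
      volume (S ∩ Ioo (((i.val:ℝ)+1)/n - ε) (((i.val:ℝ)+1)/n + ε)) := by
  rw [vFoc]
  simp only [hi, if_true]
  rw [unifOn, Measure.smul_apply, Measure.restrict_apply hS, smul_eq_mul]
  congr 2
  ring

lemma vFoc_last (n : ℕ) (ε : ℝ) (i : Fin n) (hi : ¬ i.val < n - 1)
    (S : Set ℝ) (hS : MeasurableSet S) :
    vFoc n ε i S = volume (S ∩ Icc (0:ℝ) 1) := by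
  rw [vFoc]
  simp only [hi, if_false]
  exact Measure.restrict_apply hS

set_option maxHeartbeats 2000000 in
/-- Every envy-free complete connected division of the focused-players instance
cuts the cake exactly at the points `i/n`; player `n` gets utility `1/n` and
every focused player gets utility `1/2`. -/
theorem cuts_at_multiples (n : ℕ) (hn : 2 < n) (ε : ℝ) (hε : 0 < ε)
    (hε' : ε < 1/((n:ℝ)*(n+1)))
    (d : ConnDiv n) (hc : d.Complete) (hEF : EnvyFree (vFoc n ε) d) :
    (∀ i : Fin n, ∃ k : ℕ, k < n ∧ d.pieces i = Set.Ioo ((k:ℝ)/n) (((k:ℝ)+1)/n)) ∧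
    (∀ i : Fin n, i.val < n - 1 →
      vFoc n ε i (d.pieces i) = ENNReal.ofReal (1/2)) ∧
    vFoc n ε ⟨n-1, by omega⟩ (d.pieces ⟨n-1, by omega⟩) = ENNReal.ofReal (1/(n:ℝ)) := by
  classical
  have hn0 : (0:ℝ) < n := by exact_mod_cast (show 0 < n by omega)
  have hn3 : (3:ℝ) ≤ n := by exact_mod_cast hn
  have h2ε : 2*ε < 1/n := by
    have hεn : ε * ((n:ℝ)*(n+1)) < 1 := (lt_div_iff₀ (by positivity)).mp hε'
    rw [lt_div_iff₀ hn0]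
    nlinarith [mul_pos hε hn0]
  have hεn : ε < 1/n := by linarith
  choose A B hAB using d.isInterval
  have hmeas : ∀ j, MeasurableSet (d.pieces j) := fun j => by
    rw [hAB]; exact measurableSet_Ioo
  set lastI : Fin n := ⟨n-1, by omega⟩ with hlastI
  -- sum of lengths is 1
  have hsum : ∑ j, volume (d.pieces j) = 1 := by
    have hd : volume (⋃ j, d.pieces j) = ∑ j, volume (d.pieces j) := by
      rw [measure_iUnion d.disj hmeas, tsum_fintype]
    apply le_antisymm
    · rw [← hd]
      calc volume (⋃ j, d.pieces j) ≤ volume (Icc (0:ℝ) 1) :=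
            measure_mono (iUnion_subset d.subset)
        _ = 1 := by rw [Real.volume_Icc]; norm_num
    · calc (1:ℝ≥0∞) = volume (Icc (0:ℝ) 1) := by rw [Real.volume_Icc]; norm_num
        _ ≤ volume (⋃ j, closure (d.pieces j)) := measure_mono hc
        _ ≤ ∑' j, volume (closure (d.pieces j)) := measure_iUnion_le _
        _ = ∑ j, volume (closure (d.pieces j)) := tsum_fintype _
        _ = ∑ j, volume (d.pieces j) := by
            refine Finset.sum_congr rfl fun j _ => ?_
            rw [hAB j, vol_closure_Ioo, Real.volume_Ioo]
  have hfin : ∀ j, volume (d.pieces j) ≠ ⊤ := by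
    intro j
    have h1 : volume (d.pieces j) ≤ 1 := by
      rw [← hsum]
      exact Finset.single_le_sum (f := fun j => volume (d.pieces j))
        (fun i _ => zero_le) (Finset.mem_univ j)
    exact ne_top_of_le_ne_top (by norm_num) h1
  set ℓ : Fin n → ℝ := fun j => (volume (d.pieces j)).toReal with hℓdef
  have hℓ : ∀ j, ℓ j = max (B j - A j) 0 := by
    intro j
    rcases le_total (B j - A j) 0 with h | h
    · simp only [hℓdef, hAB j, Real.volume_Ioo]
      rw [ENNReal.ofReal_eq_zero.mpr h, ENNReal.toReal_zero, max_eq_right h]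
    · simp only [hℓdef, hAB j, Real.volume_Ioo]
      rw [ENNReal.toReal_ofReal h, max_eq_left h]
  have hℓnn : ∀ j, 0 ≤ ℓ j := fun j => ENNReal.toReal_nonneg
  have hℓsum : ∑ j, ℓ j = 1 := by
    rw [hℓdef, ← ENNReal.toReal_sum (fun j _ => hfin j), hsum, ENNReal.toReal_one]
  have hle : ∀ j, ℓ j ≤ ℓ lastI := by
    intro j
    have h := hEF lastI j
    rw [vFoc_last n ε lastI (by simp [hlastI]) _ (hmeas j),
      vFoc_last n ε lastI (by simp [hlastI]) _ (hmeas lastI),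
      inter_eq_left.mpr (d.subset j), inter_eq_left.mpr (d.subset lastI)] at h
    exact ENNReal.toReal_mono (hfin lastI) h
  have hlast_ge : 1/(n:ℝ) ≤ ℓ lastI := by
    by_contra hcon
    push_neg at hcon
    have h1 : ∑ j, ℓ j ≤ ∑ _j : Fin n, ℓ lastI :=
      Finset.sum_le_sum fun j _ => hle j
    rw [Finset.sum_const, Finset.card_univ, Fintype.card_fin, nsmul_eq_mul] at h1
    rw [hℓsum] at h1
    have : (n:ℝ) * ℓ lastI < n * (1/n) := by
      apply mul_lt_mul_of_pos_left hcon hn0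
    rw [mul_one_div, div_self (ne_of_gt hn0)] at this
    linarith
  -- the cross claim
  have hcross : ∀ (i : ℕ), i + 1 < n → ∀ (j : Fin n), (j:ℕ) ≠ i →
      A j < ((i:ℝ)+1)/n → ((i:ℝ)+1)/n < B j → 2*ε < B j - A j → False := by
    intro i hi j hji h1 h2 h3
    set m : ℝ := ((i:ℝ)+1)/n with hm
    set ii : Fin n := ⟨i, by omega⟩ with hii
    have hival : ii.val < n - 1 := by simp [hii]; omega
    have hEFi := hEF ii j
    rw [vFoc_focused n ε hε ii hival _ (hmeas j),
      vFoc_focused n ε hε ii hival _ (hmeas ii)] at hEFi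
    simp only [hii, Fin.val_mk] at hEFi
    rw [← hm] at hEFi
    have hC0 : (ENNReal.ofReal (1/(2*ε))) ≠ 0 := by
      simp [ENNReal.ofReal_eq_zero]
      positivity
    have hvol := (ENNReal.mul_le_mul_iff_right hC0 ENNReal.ofReal_ne_top).mp hEFi
    rw [hAB j, hAB ii, Ioo_inter_Ioo, Ioo_inter_Ioo, Real.volume_Ioo,
      Real.volume_Ioo] at hvol
    -- disjointness
    have hne : ii ≠ j := by
      intro h
      exact hji (by rw [← h])
    have hempty : Ioo (max (A ii) (A j)) (min (B ii) (B j)) = ∅ := by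
      rw [← Ioo_inter_Ioo, ← hAB ii, ← hAB j]
      exact Set.disjoint_iff_inter_eq_empty.mp (d.disj hne)
    have hkey : ¬ (max (A ii) (A j) < min (B ii) (B j)) := by
      intro h'
      have h'' := Set.nonempty_Ioo.mpr h'
      rw [hempty] at h''
      exact Set.not_nonempty_empty h''
    push_neg at hkey
    -- the real inequality
    have hlt : min (B ii) (m+ε) - max (A ii) (m-ε) < min (B j) (m+ε) - max (A j) (m-ε) := by
      have hb1 : min (B ii) (m+ε) ≤ B ii := min_le_left _ _
      have hb2 : min (B ii) (m+ε) ≤ m+ε := min_le_right _ _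
      have ha1 : A ii ≤ max (A ii) (m-ε) := le_max_left _ _
      have ha2 : m-ε ≤ max (A ii) (m-ε) := le_max_right _ _
      rcases min_cases (B ii) (B j) with ⟨e3, c3⟩ | ⟨e3, c3⟩ <;>
        rw [e3] at hkey <;>
        rcases max_cases (A ii) (A j) with ⟨e4, c4⟩ | ⟨e4, c4⟩ <;>
        rw [e4] at hkey <;>
        rcases min_cases (B j) (m+ε) with ⟨e1, c1⟩ | ⟨e1, c1⟩ <;>
        rw [e1] <;>
        rcases max_cases (A j) (m-ε) with ⟨e2, c2⟩ | ⟨e2, c2⟩ <;>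
        rw [e2] <;>
        linarith
    have hpos : 0 < min (B j) (m+ε) - max (A j) (m-ε) := by
      have : m < min (B j) (m+ε) := lt_min h2 (by linarith)
      have : max (A j) (m-ε) < m := max_lt h1 (by linarith)
      linarith [lt_min h2 (show m < m + ε by linarith)]
    exact absurd hvol (not_le.mpr ((ENNReal.ofReal_lt_ofReal_iff hpos).mpr hlt))
  -- length of the last piece equals 1/n
  have hApos0 : ∀ j, A j < B j → 0 ≤ A j ∧ B j ≤ 1 := by
    intro j hj
    exact myIoo_sub_Icc hj (by rw [← hAB j]; exact d.subset j)
  have hlastBA : B lastI - A lastI = 1/n := by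
    have hge : 1/(n:ℝ) ≤ B lastI - A lastI := by
      have := hlast_ge
      rw [hℓ lastI] at this
      rcases le_total (B lastI - A lastI) 0 with h | h
      · rw [max_eq_right h] at this
        exfalso
        have : (0:ℝ) < 1/n := by positivity
        linarith
      · rwa [max_eq_left h] at this
    apply le_antisymm _ hge
    by_contra hgt
    push_neg at hgt
    have hab : A lastI < B lastI := by
      have : (0:ℝ) < 1/n := by positivity
      linarith
    obtain ⟨h0, h1⟩ := hApos0 lastI hab
    obtain ⟨k, hk1, hk2, hk3, hk4⟩ :=
      grid_lemma n (by omega) (A lastI) (B lastI) h0 h1 (by linarith)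
    refine hcross (k-1) (by omega) lastI (by simp [hlastI]; omega) ?_ ?_ (by linarith)
    · have hcast : (((k-1:ℕ)):ℝ) + 1 = (k:ℝ) := by
        rw [Nat.cast_sub hk1]; push_cast; ring
      rw [hcast]; exact hk3
    · have hcast : (((k-1:ℕ)):ℝ) + 1 = (k:ℝ) := by
        rw [Nat.cast_sub hk1]; push_cast; ring
      rw [hcast]; exact hk4
  -- all pieces have length 1/n
  have hlen : ∀ j, B j - A j = 1/n := by
    have hℓlast : ℓ lastI = 1/n := by
      rw [hℓ lastI, hlastBA, max_eq_left (by positivity)]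
    have hℓall : ∀ j, ℓ j = 1/n := by
      intro j
      by_contra hne
      have hjlt : ℓ j < 1/n := lt_of_le_of_ne (hℓlast ▸ hle j) hne
      have h1 : ∑ j', ℓ j' < ∑ _j' : Fin n, (1/(n:ℝ)) := by
        apply Finset.sum_lt_sum (fun j' _ => hℓlast ▸ hle j')
        exact ⟨j, Finset.mem_univ j, hjlt⟩
      rw [Finset.sum_const, Finset.card_univ, Fintype.card_fin, nsmul_eq_mul,
        mul_one_div, div_self (ne_of_gt hn0), hℓsum] at h1
      exact lt_irrefl _ h1
    intro j
    have := hℓall j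
    rw [hℓ j] at this
    rcases le_total (B j - A j) 0 with h | h
    · rw [max_eq_right h] at this
      exfalso
      have : (0:ℝ) < 1/n := by positivity
      linarith
    · rwa [max_eq_left h] at this
  have hab : ∀ j, A j < B j := by
    intro j
    have := hlen j
    have : (0:ℝ) < 1/n := by positivity
    linarith [hlen j]
  have hApos : ∀ j, 0 ≤ A j ∧ B j ≤ 1 := fun j => hApos0 j (hab j)
  -- left-neighbor lemma
  have hnbr : ∀ (j0 : Fin n) (c : ℝ), 0 ≤ c → c < A j0 →
      ∃ j : Fin n, B j ≤ A j0 ∧ c < B j ∧ A j < A j0 := by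
    intro j0 c hc0 hcA
    have hA1 : A j0 ≤ 1 := le_trans (hab j0).le (hApos j0).2
    have hsub : Ioo c (A j0) ⊆ Icc (0:ℝ) 1 := by
      intro x hx
      exact ⟨le_trans hc0 hx.1.le, le_trans hx.2.le hA1⟩
    have hvolS : (0:ℝ≥0∞) < volume (Ioo c (A j0)) := by
      rw [Real.volume_Ioo]
      exact ENNReal.ofReal_pos.mpr (by linarith)
    have hcov : Ioo c (A j0) ⊆ ⋃ j, closure (d.pieces j) ∩ Ioo c (A j0) := by
      intro x hx
      obtain ⟨j, hj⟩ := mem_iUnion.mp (hc (hsub hx))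
      exact mem_iUnion.mpr ⟨j, hj, hx⟩
    have hsum2 : volume (Ioo c (A j0)) ≤ ∑ j, volume (closure (d.pieces j) ∩ Ioo c (A j0)) := by
      calc volume (Ioo c (A j0)) ≤ volume (⋃ j, closure (d.pieces j) ∩ Ioo c (A j0)) :=
            measure_mono hcov
        _ ≤ ∑' j, volume (closure (d.pieces j) ∩ Ioo c (A j0)) := measure_iUnion_le _
        _ = ∑ j, volume (closure (d.pieces j) ∩ Ioo c (A j0)) := tsum_fintype _
    have hex : ∃ j, volume (closure (d.pieces j) ∩ Ioo c (A j0)) ≠ 0 := by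
      by_contra hall
      push_neg at hall
      rw [Finset.sum_eq_zero (fun j _ => hall j)] at hsum2
      exact absurd (le_antisymm hsum2 zero_le) (ne_of_gt hvolS)
    obtain ⟨j, hj⟩ := hex
    rw [hAB j, closure_Ioo (hab j).ne] at hj
    have hsub2 : Icc (A j) (B j) ∩ Ioo c (A j0) ⊆
        Icc (max (A j) c) (min (B j) (A j0)) := by
      intro x ⟨hx1, hx2⟩
      exact ⟨max_le hx1.1 hx2.1.le, le_min hx1.2 hx2.2.le⟩
    have hj2 : (0:ℝ≥0∞) < volume (Icc (max (A j) c) (min (B j) (A j0))) :=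
      lt_of_lt_of_le (pos_iff_ne_zero.mpr hj) (measure_mono hsub2)
    rw [Real.volume_Icc] at hj2
    have hmm : max (A j) c < min (B j) (A j0) := by
      have := ENNReal.ofReal_pos.mp hj2
      by_contra hcon
      push_neg at hcon
      linarith
    have hAj : A j < A j0 :=
      lt_of_le_of_lt (le_max_left (A j) c) (lt_of_lt_of_le hmm (min_le_right _ _))
    have hcB : c < B j :=
      lt_of_le_of_lt (le_max_right (A j) c) (lt_of_lt_of_le hmm (min_le_left _ _))
    have hne : j ≠ j0 := by
      intro h; rw [h] at hAj; exact lt_irrefl _ hAj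
    have hempty : Ioo (max (A j) (A j0)) (min (B j) (B j0)) = ∅ := by
      rw [← Ioo_inter_Ioo, ← hAB j, ← hAB j0]
      exact Set.disjoint_iff_inter_eq_empty.mp (d.disj hne)
    have hkey : ¬ (max (A j) (A j0) < min (B j) (B j0)) := by
      intro h'
      have h'' := Set.nonempty_Ioo.mpr h'
      rw [hempty] at h''
      exact Set.not_nonempty_empty h''
    push_neg at hkey
    rw [max_eq_right hAj.le] at hkey
    have hBj : B j ≤ A j0 := by
      rcases min_cases (B j) (B j0) with ⟨e, _⟩ | ⟨e, _⟩
      · rwa [e] at hkey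
      · rw [e] at hkey
        exact absurd hkey (not_le.mpr (hab j0))
    exact ⟨j, hBj, hcB, hAj⟩
  -- descent: no piece i straddles its own grid point (i+1)/n
  have hdesc : ∀ i : ℕ, ∀ hi : i + 1 < n,
      ¬ ((i:ℝ)/n < A ⟨i, by omega⟩ ∧ A ⟨i, by omega⟩ < ((i:ℝ)+1)/n) := by
    intro i
    induction i with
    | zero =>
      intro hi hcon
      obtain ⟨h1, h2⟩ := hcon
      have h1' : (0:ℝ) < A ⟨0, by omega⟩ := by
        have : ((0:ℕ):ℝ)/n = 0 := by norm_num
        rwa [this] at h1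
      obtain ⟨j, hj1, hj2, hj3⟩ := hnbr ⟨0, by omega⟩ 0 le_rfl h1'
      have hlj := hlen j
      have h0j := (hApos j).1
      have h2' : A ⟨0, by omega⟩ < 1/n := by
        have : (((0:ℕ):ℝ)+1)/n = 1/n := by norm_num
        rwa [this] at h2
      -- A j = B j - 1/n ≤ A_0 - 1/n < 0
      linarith
    | succ m ih =>
      intro hi hcon
      obtain ⟨h1, h2⟩ := hcon
      have hpos : (0:ℝ) ≤ ((m+1:ℕ):ℝ)/n := by positivity
      obtain ⟨j, hj1, hj2, hj3⟩ := hnbr ⟨m+1, by omega⟩ (((m+1:ℕ):ℝ)/n) hpos h1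
      have hlj := hlen j
      have harith : (((m+1:ℕ)):ℝ) = (m:ℝ) + 1 := by push_cast; ring
      -- A j < (m+1)/n and (m)/n < A j ... i.e. grid point (m+1)/n inside (A j, B j)
      have hAj_lt : A j < ((m:ℝ)+1)/n := by
        -- A j = B j - 1/n ≤ A_{m+1} - 1/n < (m+2)/n - 1/n = (m+1)/n
        have h2' : A ⟨m+1, by omega⟩ < ((m:ℝ)+2)/n := by
          have : (((m+1:ℕ)):ℝ) + 1 = (m:ℝ) + 2 := by push_cast; ring
          rwa [this] at h2
        have : ((m:ℝ)+2)/n - 1/n = ((m:ℝ)+1)/n := by ring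
        linarith
      have hBj_gt : ((m:ℝ)+1)/n < B j := by rwa [harith] at hj2
      by_cases hjm : (j:ℕ) = m
      · have hjeq : j = ⟨m, by omega⟩ := Fin.ext hjm
        apply ih (by omega)
        constructor
        · rw [← hjeq]
          -- A j = B j - 1/n > (m+1)/n - 1/n = m/n
          have : ((m:ℝ)+1)/n - 1/n = (m:ℝ)/n := by ring
          linarith
        · rw [← hjeq]
          exact hAj_lt
      · exact hcross m (by omega) j hjm hAj_lt hBj_gt (by linarith)
  -- alignment: every left endpoint is a multiple of 1/n
  have halign : ∀ j : Fin n, ∃ k : ℕ, k < n ∧ A j = (k:ℝ)/n := by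
    intro j
    have h0 : 0 ≤ A j := (hApos j).1
    have h1 : B j ≤ 1 := (hApos j).2
    have hlj := hlen j
    set k0 := ⌊A j * n⌋₊ with hk0
    have hfl : (k0:ℝ) ≤ A j * n := Nat.floor_le (by positivity)
    by_cases hexact : (k0:ℝ) = A j * n
    · refine ⟨k0, ?_, ?_⟩
      · have hA1 : A j ≤ 1 - 1/n := by linarith
        have : (k0:ℝ) ≤ (1 - 1/n) * n := by nlinarith
        have h2 : (k0:ℝ) < n := by
          have : (1 - 1/n) * (n:ℝ) = n - 1 := by field_simp
          linarith [this]
        exact_mod_cast h2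
      · rw [eq_div_iff (ne_of_gt hn0)]
        linarith
    · exfalso
      have hflt : (k0:ℝ) < A j * n := lt_of_le_of_ne hfl hexact
      have hlt : A j * n < (k0:ℝ) + 1 := Nat.lt_floor_add_one _
      have hAjlt : A j < ((k0:ℝ)+1)/n := by rw [lt_div_iff₀ hn0]; linarith
      have hBjgt : ((k0:ℝ)+1)/n < B j := by
        rw [div_lt_iff₀ hn0]
        have : B j = A j + 1/n := by linarith
        rw [this]
        have : (A j + 1/n) * n = A j * n + 1 := by field_simp
        linarith
      have hk0n : k0 + 1 < n := by
        have : ((k0:ℝ)+1)/n < 1 := lt_of_lt_of_le hBjgt h1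
        rw [div_lt_one hn0] at this
        exact_mod_cast (by push_cast; linarith : ((k0 + 1 : ℕ):ℝ) < (n:ℝ))
      by_cases hjk : (j:ℕ) = k0
      · have hjeq : j = ⟨k0, by omega⟩ := Fin.ext hjk
        refine hdesc k0 (by omega) ⟨?_, ?_⟩
        · rw [← hjeq, div_lt_iff₀ hn0]
          linarith
        · rw [← hjeq]
          exact hAjlt
      · exact hcross k0 (by omega) j hjk hAjlt hBjgt (by linarith)
  -- conclusion 1
  have conc1 : ∀ j : Fin n, ∃ k : ℕ, k < n ∧
      d.pieces j = Ioo ((k:ℝ)/n) (((k:ℝ)+1)/n) := by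
    intro j
    obtain ⟨k, hk1, hk2⟩ := halign j
    refine ⟨k, hk1, ?_⟩
    rw [hAB j, hk2]
    congr 1
    have : B j = A j + 1/n := by linarith [hlen j]
    rw [this, hk2]
    ring
  choose K hK1 hK2 using conc1
  -- value of a block for a focused player
  have hval : ∀ (i : Fin n), i.val < n - 1 → ∀ k : ℕ,
      vFoc n ε i (Ioo ((k:ℝ)/n) (((k:ℝ)+1)/n)) =
        if k = i.val ∨ k = i.val + 1 then ENNReal.ofReal (1/2) else 0 := by
    intro i hi k
    rw [vFoc_focused n ε hε i hi _ measurableSet_Ioo, Ioo_inter_Ioo, Real.volume_Ioo]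
    set m : ℝ := ((i.val:ℝ)+1)/n with hm
    split_ifs with hcond
    · have hlen2 : min (((k:ℝ)+1)/n) (m+ε) - max ((k:ℝ)/n) (m-ε) = ε := by
        rcases hcond with h | h
        · have hc1 : ((k:ℝ)+1)/n = m := by rw [h, hm]
          have hc2 : (k:ℝ)/n = m - 1/n := by rw [h, hm]; ring
          rw [hc1, hc2, min_eq_left (by linarith), max_eq_right (by linarith)]
          ring
        · have hc1 : (k:ℝ)/n = m := by rw [h, hm]; push_cast; ring
          have hc2 : ((k:ℝ)+1)/n = m + 1/n := by rw [h, hm]; push_cast; ring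
          rw [hc1, hc2, min_eq_right (by linarith), max_eq_left (by linarith)]
          ring
      rw [hlen2, ← ENNReal.ofReal_mul (by positivity)]
      congr 1
      field_simp
    · push_neg at hcond
      have hknat : k + 1 ≤ i.val ∨ i.val + 2 ≤ k := by omega
      have hle0 : min (((k:ℝ)+1)/n) (m+ε) - max ((k:ℝ)/n) (m-ε) ≤ 0 := by
        rcases hknat with h | h
        · have hcast : ((k:ℝ)+1) ≤ (i.val:ℝ) := by exact_mod_cast h
          have hdiv : ((k:ℝ)+1)/n ≤ (i.val:ℝ)/n := by gcongr
          have harith : ((i.val:ℝ))/n = m - 1/n := by rw [hm]; ring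
          have h1 : min (((k:ℝ)+1)/n) (m+ε) ≤ m - 1/n := by
            calc min (((k:ℝ)+1)/n) (m+ε) ≤ ((k:ℝ)+1)/n := min_le_left _ _
              _ ≤ (i.val:ℝ)/n := hdiv
              _ = m - 1/n := harith
          have h2 : m - ε ≤ max ((k:ℝ)/n) (m-ε) := le_max_right _ _
          linarith
        · have hcast : ((i.val:ℝ)+2) ≤ (k:ℝ) := by exact_mod_cast h
          have hdiv : ((i.val:ℝ)+2)/n ≤ (k:ℝ)/n := by gcongr
          have harith : ((i.val:ℝ)+2)/n = m + 1/n := by rw [hm]; ring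
          have h1 : m + 1/n ≤ max ((k:ℝ)/n) (m-ε) := by
            calc m + 1/n = ((i.val:ℝ)+2)/n := harith.symm
              _ ≤ (k:ℝ)/n := hdiv
              _ ≤ max ((k:ℝ)/n) (m-ε) := le_max_left _ _
          have h2 : min (((k:ℝ)+1)/n) (m+ε) ≤ m+ε := min_le_right _ _
          linarith
      rw [ENNReal.ofReal_eq_zero.mpr hle0, mul_zero]
  -- injectivity and surjectivity of the block assignment
  have hKinj : Function.Injective (fun j : Fin n => (⟨K j, hK1 j⟩ : Fin n)) := by
    intro j1 j2 h
    simp only [Fin.mk.injEq] at h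
    by_contra hne
    have hdisj : Disjoint (d.pieces j1) (d.pieces j2) := d.disj hne
    rw [hK2 j1, hK2 j2, h] at hdisj
    have hnonempty : (Ioo ((K j2 : ℝ)/n) (((K j2:ℝ)+1)/n)).Nonempty := by
      apply Set.nonempty_Ioo.mpr
      have : (0:ℝ) < 1/n := by positivity
      have harith : ((K j2:ℝ)+1)/n = (K j2:ℝ)/n + 1/n := by ring
      linarith
    rw [disjoint_self] at hdisj
    rw [hdisj] at hnonempty
    exact Set.not_nonempty_empty hnonempty
  have hKsurj := Finite.injective_iff_surjective.mp hKinj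
  -- conclusion 2
  have conc2 : ∀ i : Fin n, i.val < n - 1 →
      vFoc n ε i (d.pieces i) = ENNReal.ofReal (1/2) := by
    intro i hi
    obtain ⟨j, hj⟩ := hKsurj ⟨i.val, i.isLt⟩
    simp only [Fin.mk.injEq] at hj
    by_cases hji : j = i
    · rw [hK2 i, hval i hi (K i), if_pos (Or.inl (by rw [hji] at hj; exact hj))]
    · have hEFij := hEF i j
      rw [hK2 j, hval i hi (K j), if_pos (Or.inl hj), hK2 i, hval i hi (K i)] at hEFij
      rw [hK2 i, hval i hi (K i)]
      split_ifs with hcond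
      · rfl
      · rw [if_neg hcond] at hEFij
        exfalso
        have : (0:ℝ≥0∞) < ENNReal.ofReal (1/2) := ENNReal.ofReal_pos.mpr (by norm_num)
        exact absurd (le_antisymm hEFij zero_le) (ne_of_gt this)
  refine ⟨fun j => ⟨K j, hK1 j, hK2 j⟩, conc2, ?_⟩
  -- conclusion 3
  have hlast' : ¬ ((⟨n-1, by omega⟩ : Fin n) : ℕ) < n - 1 := by simp
  rw [vFoc_last n ε _ hlast' _ (hmeas _), inter_eq_left.mpr (d.subset _),
    hAB, Real.volume_Ioo, hlen]
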